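/- arXiv:1208.6398 — 3 statements merged into one kernel-verified Lean document; each statement's English description precedes it below -/
import Mathlib

section
/- Let n ∈ ℕ, let Ω ⊆ ℝⁿ be a compact set, let λ be a finite Borel measure supported on Ω, and let u ∈ L²(Ω,λ) with u ≥ 0 λ-almost everywhere. Then for every ε > 0 there exists a polynomial w with w(x) ≥ 0 for all x ∈ Ω (indeed w can be taken strictly positive on Ω) such that ‖u − w‖_{L²(Ω,λ)} < ε. In other words, the cone P(Ω) of polynomials nonnegative on Ω is dense in the cone of nonnegative elements of L²(Ω,λ) with respect to the L²-norm. -/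
open MeasureTheory Matrix Finset

noncomputable section

/-- The set of multi-indices `α : Fin n → ℕ` with `|α| = ∑ i, α i ≤ d`, as a `Finset`. -/
def multiIdx (n d : ℕ) : Finset (Fin n → ℕ) :=
  (Fintype.piFinset fun _ : Fin n => Finset.range (d + 1)).filter fun α => ∑ i, α i ≤ d

/-- The monomial `x^α = ∏ i, x i ^ α i`. -/
def mono {n : ℕ} (α : Fin n → ℕ) (x : Fin n → ℝ) : ℝ := ∏ i, x i ^ α i

/-- Any multivariate polynomial can be written as a finite linear combination of
monomials indexed by `multiIdx n N` for `N` its total degree. -/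
lemma poly_repr {n : ℕ} (p : MvPolynomial (Fin n) ℝ) :
    ∃ (N : ℕ) (c : ↥(multiIdx n N) → ℝ),
      ∀ x : Fin n → ℝ, ∑ α : ↥(multiIdx n N), c α * mono (↑α) x = MvPolynomial.eval x p := by
  classical
  set N := p.totalDegree with hN
  set e : (Fin n →₀ ℕ) ≃ (Fin n → ℕ) := Finsupp.equivFunOnFinite with he
  refine ⟨N, fun α => p.coeff (e.symm ↑α), fun x => ?_⟩
  rw [Finset.sum_coe_sort (multiIdx n N) (fun α => p.coeff (e.symm α) * mono α x)]
  have hsub : p.support.image e ⊆ multiIdx n N := by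
    intro α hα
    rcases Finset.mem_image.mp hα with ⟨d, hd, rfl⟩
    have hsum : ∑ i, d i ≤ N := by
      have := MvPolynomial.le_totalDegree hd
      rwa [Finsupp.sum_fintype _ _ (fun _ => rfl)] at this
    refine Finset.mem_filter.mpr ⟨Fintype.mem_piFinset.mpr fun i => ?_, ?_⟩
    · exact Finset.mem_range.mpr (Nat.lt_succ_of_le
        ((Finset.single_le_sum (fun i _ => Nat.zero_le (d i)) (Finset.mem_univ i)).trans hsum))
    · simpa [he, Finsupp.equivFunOnFinite] using hsum
  rw [← Finset.sum_subset hsub (by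
    intro α _ hα
    have : e.symm α ∉ p.support := by
      intro h
      exact hα (Finset.mem_image.mpr ⟨e.symm α, h, e.apply_symm_apply α⟩)
    simp [MvPolynomial.notMem_support_iff.mp this])]
  rw [Finset.sum_image (fun a _ b _ h => e.injective h)]
  rw [MvPolynomial.eval_eq']
  refine Finset.sum_congr rfl fun d _ => ?_
  rw [Equiv.symm_apply_apply]
  simp only [mono, he, Finsupp.equivFunOnFinite_apply]

lemma aeval_coords {n : ℕ} {Ω : Set (Fin n → ℝ)}
    (coords : Fin n → C(Ω, ℝ)) (hcoords : ∀ i (y : Ω), coords i y = (y : Fin n → ℝ) i)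
    (p : MvPolynomial (Fin n) ℝ) (y : Ω) :
    (MvPolynomial.aeval coords p) y = MvPolynomial.eval (y : Fin n → ℝ) p := by
  induction p using MvPolynomial.induction_on with
  | C a => simp [MvPolynomial.algebraMap_eq]
  | add p q hp hq => simp [hp, hq]
  | mul_X p i hp => simp [hp, hcoords]

/-- polynomials nonnegative (indeed strictly positive) on the compact set
`Ω` are dense, for the `L²(Ω,λ)`-norm, in the cone of nonnegative elements of
`L²(Ω,λ)`: for every `ε > 0` there is a polynomial `w` (of some degree `N`) with
`w > 0` on `Ω` and `‖u - w‖_{L²(Ω,λ)} < ε`. -/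
theorem stmt5 (n : ℕ) (Ω : Set (Fin n → ℝ)) (hΩ : IsCompact Ω)
    (μ : Measure (Fin n → ℝ)) [IsFiniteMeasure μ] (hsupp : μ Ωᶜ = 0)
    (u : (Fin n → ℝ) → ℝ) (hu : MemLp u 2 (μ.restrict Ω))
    (hupos : ∀ᵐ x ∂(μ.restrict Ω), 0 ≤ u x)
    (ε : ℝ) (hε : 0 < ε) :
    ∃ (N : ℕ) (c : ↥(multiIdx n N) → ℝ),
      (∀ x ∈ Ω, 0 < ∑ α : ↥(multiIdx n N), c α * mono (↑α) x) ∧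
      eLpNorm (fun x => u x - ∑ α : ↥(multiIdx n N), c α * mono (↑α) x) 2 (μ.restrict Ω)
        < ENNReal.ofReal ε := by
  classical
  haveI : CompactSpace Ω := isCompact_iff_compactSpace.mp hΩ
  have hΩmeas : MeasurableSet Ω := hΩ.isClosed.measurableSet
  -- Step 1 : continuous approximation of u
  obtain ⟨g, hg_close, hg_mem⟩ :=
    hu.exists_boundedContinuous_eLpNorm_sub_le (hp := by norm_num)
      (ε := ENNReal.ofReal (ε/4))
      (hε := by simp only [ne_eq, ENNReal.ofReal_eq_zero, not_le]; positivity)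
  -- Step 2 : replace g by its positive part
  set g₀ : (Fin n → ℝ) → ℝ := fun x => max (g x) 0 with hg₀
  have hg₀_cont : Continuous g₀ := g.continuous.max continuous_const
  have hg₀_close : eLpNorm (fun x => u x - g₀ x) 2 (μ.restrict Ω) ≤ ENNReal.ofReal (ε/4) := by
    refine le_trans (eLpNorm_mono_ae ?_) hg_close
    filter_upwards [hupos] with x hx
    simp only [Pi.sub_apply, hg₀, Real.norm_eq_abs]
    rcases le_total (g x) 0 with h | h
    · rw [sup_eq_right.mpr h, sub_zero, abs_of_nonneg hx]
      exact le_trans (by linarith) (le_abs_self (u x - g x))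
    · rw [sup_eq_left.mpr h]
  -- Step 3 : constants
  set K : ENNReal := ((μ.restrict Ω) Set.univ) ^ (2 : ℝ)⁻¹ with hK
  have hKfin : K ≠ ⊤ := by
    refine (ENNReal.rpow_lt_top_of_nonneg (by norm_num) ?_).ne
    exact (measure_lt_top _ _).ne
  set δ : ℝ := (ε/4) / (K.toReal + 1) with hδ
  have hKnn : 0 ≤ K.toReal := ENNReal.toReal_nonneg
  have hδpos : 0 < δ := by positivity
  -- Step 4 : Stone-Weierstrass on Ω
  set coords : Fin n → C(Ω, ℝ) :=
    fun i => ⟨fun y => (y : Fin n → ℝ) i, (continuous_apply i).comp continuous_subtype_val⟩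
  set A : Subalgebra ℝ C(Ω, ℝ) := (MvPolynomial.aeval coords).range with hA
  have hAsep : A.SeparatesPoints := by
    intro x y hxy
    have : ∃ i, (x : Fin n → ℝ) i ≠ (y : Fin n → ℝ) i := by
      by_contra h
      push_neg at h
      exact hxy (Subtype.ext (funext h))
    obtain ⟨i, hi⟩ := this
    refine ⟨coords i, ⟨coords i, ⟨MvPolynomial.X i, by simp⟩, rfl⟩, ?_⟩
    simpa [coords] using hi
  obtain ⟨q, hq⟩ := ContinuousMap.exists_mem_subalgebra_near_continuous_of_separatesPoints
    A hAsep (fun y : Ω => g₀ ↑y) (hg₀_cont.comp continuous_subtype_val) δ hδpos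
  obtain ⟨p, hp⟩ := q.2
  have hq_eval : ∀ y : Ω, |MvPolynomial.eval (y : Fin n → ℝ) p - g₀ ↑y| < δ := by
    intro y
    have h3 : ((q : C(↑Ω, ℝ)) : ↑Ω → ℝ) y = MvPolynomial.eval (y : Fin n → ℝ) p := by
      rw [← hp]
      exact aeval_coords coords (fun i y => rfl) p y
    have h4 := hq y
    rwa [Real.norm_eq_abs, h3] at h4
  -- the final polynomial : p + δ
  set P : MvPolynomial (Fin n) ℝ := p + MvPolynomial.C δ with hP
  obtain ⟨N, c, hc⟩ := poly_repr P
  refine ⟨N, c, ?_, ?_⟩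
  · intro x hx
    rw [hc x]
    have := hq_eval ⟨x, hx⟩
    have h1 : g₀ x - δ < MvPolynomial.eval x p := by
      have := abs_lt.mp this
      linarith [this.1]
    have h2 : 0 ≤ g₀ x := le_max_right _ _
    simp only [hP, map_add, MvPolynomial.eval_C]
    linarith
  · -- L² estimate
    have heq : (fun x => u x - ∑ α : ↥(multiIdx n N), c α * mono (↑α) x)
        = (fun x => u x - MvPolynomial.eval x P) := by
      funext x; rw [hc x]
    rw [heq]
    have hsplit : (fun x => u x - MvPolynomial.eval x P)
        = (fun x => u x - g₀ x) + (fun x => g₀ x - MvPolynomial.eval x P) := by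
      funext x; simp
    have hmeas1 : AEStronglyMeasurable (fun x => u x - g₀ x) (μ.restrict Ω) :=
      hu.aestronglyMeasurable.sub hg₀_cont.aestronglyMeasurable
    have hmeas2 : AEStronglyMeasurable (fun x => g₀ x - MvPolynomial.eval x P)
        (μ.restrict Ω) :=
      hg₀_cont.aestronglyMeasurable.sub (P.continuous_eval).aestronglyMeasurable
    have hbound : eLpNorm (fun x => g₀ x - MvPolynomial.eval x P) 2 (μ.restrict Ω)
        ≤ K * ENNReal.ofReal (2 * δ) := by
      refine le_trans (eLpNorm_le_of_ae_bound (C := 2 * δ) ?_) ?_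
      · filter_upwards [ae_restrict_mem hΩmeas] with x hx
        have := hq_eval ⟨x, hx⟩
        have := abs_lt.mp this
        rw [Real.norm_eq_abs, abs_le]
        simp only [hP, map_add, MvPolynomial.eval_C]
        constructor <;> [linarith [this.2]; linarith [this.1, hδpos]]
      · rw [hK]
        norm_num
    have hbound2 : K * ENNReal.ofReal (2 * δ) ≤ ENNReal.ofReal (ε/2) := by
      rw [← ENNReal.ofReal_toReal hKfin, ← ENNReal.ofReal_mul hKnn]
      apply ENNReal.ofReal_le_ofReal
      rw [hδ]
      have hne : K.toReal + 1 ≠ 0 := by positivity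
      have h1 : K.toReal * (2 * ((ε/4) / (K.toReal + 1)))
          = (ε/2) * (K.toReal / (K.toReal + 1)) := by
        field_simp
        ring
      rw [h1]
      have h2 : K.toReal / (K.toReal + 1) ≤ 1 := by
        rw [div_le_one (by linarith)]; linarith
      nlinarith
    rw [hsplit]
    calc eLpNorm ((fun x => u x - g₀ x) + (fun x => g₀ x - MvPolynomial.eval x P)) 2
            (μ.restrict Ω)
        ≤ eLpNorm (fun x => u x - g₀ x) 2 (μ.restrict Ω)
          + eLpNorm (fun x => g₀ x - MvPolynomial.eval x P) 2 (μ.restrict Ω) := by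
          exact eLpNorm_add_le hmeas1 hmeas2 (by norm_num)
      _ ≤ ENNReal.ofReal (ε/4) + ENNReal.ofReal (ε/2) :=
          add_le_add hg₀_close (hbound.trans hbound2)
      _ = ENNReal.ofReal (3*ε/4) := by
          rw [← ENNReal.ofReal_add (by positivity) (by positivity)]; ring_nf
      _ < ENNReal.ofReal ε := by
          exact (ENNReal.ofReal_lt_ofReal_iff hε).mpr (by linarith)
end
end

section
/- Let n, d ∈ ℕ, let Ω ⊆ ℝⁿ be compact with nonempty interior, let λ be a finite Borel measure supported on Ω with λ(O) > 0 for some open set O ⊆ Ω, and let u ∈ L²(Ω,λ). Let F_d be the set of polynomials p of degree at most d such that the localizing matrix M_d(p z), indexed by multi-indices α, β with |α|,|β| ≤ d and with entries ∫_Ω p(x) x^{α+β} dλ(x), is positive semidefinite. Then the minimization of ∫_Ω (u − p)² dλ over p ∈ F_d attains its infimum, i.e., there exists u*_d ∈ F_d with ∫_Ω (u − u*_d)² dλ ≤ ∫_Ω (u − p)² dλ for all p ∈ F_d. -/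
open MeasureTheory Matrix Finset
open scoped ENNReal NNReal

noncomputable section

/-- The polynomial of degree at most `d` with coefficient vector `c`. -/
def poly {n : ℕ} (d : ℕ) (c : ↥(multiIdx n d) → ℝ) (x : Fin n → ℝ) : ℝ :=
  ∑ α : ↥(multiIdx n d), c α * mono (↑α) x

/-- The localizing matrix `M_d(p z)` of a function `p` w.r.t. the measure `μ` on `Ω`:
its `(α,β)` entry is `∫_Ω p(x) x^{α+β} dλ(x)`. -/
def locMat {n : ℕ} (d : ℕ) (Ω : Set (Fin n → ℝ)) (μ : Measure (Fin n → ℝ))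
    (p : (Fin n → ℝ) → ℝ) : Matrix ↥(multiIdx n d) ↥(multiIdx n d) ℝ :=
  Matrix.of fun α β : ↥(multiIdx n d) => ∫ x in Ω, p x * mono (↑α + ↑β) x ∂μ

set_option maxHeartbeats 1000000 in
/-- the minimization of `∫_Ω (u - p)² dλ` over the set `F_d` of polynomials
`p` of degree at most `d` whose localizing matrix `M_d(p z)` is positive semidefinite
attains its infimum. -/
theorem stmt8 (n d : ℕ) (Ω : Set (Fin n → ℝ)) (hΩ : IsCompact Ω)
    (hΩint : (interior Ω).Nonempty)
    (μ : Measure (Fin n → ℝ)) [IsFiniteMeasure μ] (hsupp : μ Ωᶜ = 0)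
    (O : Set (Fin n → ℝ)) (hO : IsOpen O) (hOΩ : O ⊆ Ω) (hOpos : 0 < μ O)
    (u : (Fin n → ℝ) → ℝ) (hu : MemLp u 2 (μ.restrict Ω)) :
    ∃ c : ↥(multiIdx n d) → ℝ,
      (locMat d Ω μ (poly d c)).PosSemidef ∧
      ∀ p : ↥(multiIdx n d) → ℝ, (locMat d Ω μ (poly d p)).PosSemidef →
        ∫ x in Ω, (u x - poly d c x) ^ 2 ∂μ ≤ ∫ x in Ω, (u x - poly d p x) ^ 2 ∂μ := by
  classical
  have hmeasΩ : MeasurableSet Ω := hΩ.isClosed.measurableSet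
  set ν := μ.restrict Ω with hνdef
  -- pointwise algebra of polynomials
  have hmono_mul : ∀ (α β : Fin n → ℕ) (x : Fin n → ℝ),
      mono α x * mono β x = mono (α + β) x := by
    intro α β x
    simp [mono, pow_add, Finset.prod_mul_distrib]
  have hpoly_add : ∀ (a b : ↥(multiIdx n d) → ℝ) (x : Fin n → ℝ),
      poly d (a + b) x = poly d a x + poly d b x := by
    intro a b x
    simp [poly, add_mul, Finset.sum_add_distrib]
  have hpoly_smul : ∀ (t : ℝ) (a : ↥(multiIdx n d) → ℝ) (x : Fin n → ℝ),
      poly d (t • a) x = t * poly d a x := by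
    intro t a x
    simp [poly, Finset.mul_sum, mul_assoc]
  have hpoly_zero : ∀ x : Fin n → ℝ, poly d (0 : ↥(multiIdx n d) → ℝ) x = 0 := by
    intro x; simp [poly]
  -- basic analysis facts
  have hmono_cont : ∀ β : Fin n → ℕ, Continuous (mono (n := n) β) := by
    intro β
    unfold mono
    exact continuous_finset_prod _ fun i _ => (continuous_apply i).pow _
  have hmono_mem : ∀ β : Fin n → ℕ, MemLp (mono (n := n) β) 2 ν := by
    intro β
    obtain ⟨C, hC⟩ := hΩ.exists_bound_of_continuousOn (hmono_cont β).continuousOn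
    exact MemLp.of_bound (hmono_cont β).aestronglyMeasurable C
      (((ae_restrict_mem hmeasΩ)).mono fun x hx => hC x hx)
  have hpoly_mem : ∀ c : ↥(multiIdx n d) → ℝ, MemLp (poly d c) 2 ν := by
    intro c
    exact memLp_finset_sum Finset.univ fun α _ => (hmono_mem α.1).const_mul (c α)
  have hint_mul : ∀ (f g : (Fin n → ℝ) → ℝ), MemLp f 2 ν → MemLp g 2 ν →
      Integrable (fun x => f x * g x) ν := by
    intro f g hf hg
    have h12 : (1 : ℝ≥0∞) / 1 = 1 / 2 + 1 / 2 := by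
      rw [ENNReal.div_add_div_same, one_add_one_eq_two,
        ENNReal.div_self two_ne_zero ENNReal.ofNat_ne_top]
      simp
    have h2 : Integrable (f • g) ν := memLp_one_iff_integrable.mp (hg.smul hf (r := 1))
    have heq : f • g = fun x => f x * g x := rfl
    rwa [heq] at h2
  have hintMono : ∀ γ : Fin n → ℕ, Integrable (mono (n := n) γ) ν :=
    fun γ => (hmono_mem γ).integrable one_le_two
  have hintU2 : Integrable (fun x => (u x) ^ 2) ν := hu.integrable_sq
  have hintUMono : ∀ γ : Fin n → ℕ, Integrable (fun x => u x * mono γ x) ν :=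
    fun γ => hint_mul _ _ hu (hmono_mem γ)
  have hintUPoly : ∀ c : ↥(multiIdx n d) → ℝ, Integrable (fun x => u x * poly d c x) ν :=
    fun c => hint_mul _ _ hu (hpoly_mem c)
  have hintPolySq : ∀ c : ↥(multiIdx n d) → ℝ, Integrable (fun x => (poly d c x) ^ 2) ν :=
    fun c => (hpoly_mem c).integrable_sq
  have hintSubSq : ∀ c : ↥(multiIdx n d) → ℝ,
      Integrable (fun x => (u x - poly d c x) ^ 2) ν :=
    fun c => (hu.sub (hpoly_mem c)).integrable_sq
  -- the objective function and auxiliary quantities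
  set obj : (↥(multiIdx n d) → ℝ) → ℝ := fun c => ∫ x, (u x - poly d c x) ^ 2 ∂ν
    with hobjdef
  set q : (↥(multiIdx n d) → ℝ) → ℝ := fun c => ∫ x, (poly d c x) ^ 2 ∂ν with hqdef
  set A : ℝ := ∫ x, (u x) ^ 2 ∂ν with hAdef
  set bI : ↥(multiIdx n d) → ℝ := fun α => ∫ x, u x * mono (↑α) x ∂ν with hbIdef
  set II : (Fin n → ℕ) → ℝ := fun γ => ∫ x, mono γ x ∂ν with hIIdef
  -- expansion of ∫ u * poly
  have hUP : ∀ c : ↥(multiIdx n d) → ℝ,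
      ∫ x, u x * poly d c x ∂ν = ∑ α : ↥(multiIdx n d), c α * bI α := by
    intro c
    have heq : (fun x => u x * poly d c x)
        = fun x => ∑ α : ↥(multiIdx n d), c α * (u x * mono (↑α) x) := by
      funext x
      rw [poly, Finset.mul_sum]
      exact Finset.sum_congr rfl fun α _ => by ring
    rw [heq, integral_finset_sum Finset.univ fun α _ => ((hintUMono α.1).const_mul (c α))]
    exact Finset.sum_congr rfl fun α _ => integral_const_mul _ _
  -- expansion of q
  have hq_formula : ∀ c : ↥(multiIdx n d) → ℝ,
      q c = ∑ α : ↥(multiIdx n d), ∑ β : ↥(multiIdx n d), c α * c β * II (↑α + ↑β) := by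
    intro c
    have heq : (fun x => (poly d c x) ^ 2)
        = fun x => ∑ α : ↥(multiIdx n d), ∑ β : ↥(multiIdx n d),
            c α * c β * mono (↑α + ↑β) x := by
      funext x
      rw [sq, poly, Finset.sum_mul_sum]
      refine Finset.sum_congr rfl fun α _ => Finset.sum_congr rfl fun β _ => ?_
      rw [← hmono_mul α.1 β.1 x]
      ring
    show (∫ x, (poly d c x) ^ 2 ∂ν) = _
    rw [heq, integral_finset_sum Finset.univ (fun α _ =>
      integrable_finset_sum Finset.univ fun β _ => (hintMono _).const_mul _)]
    refine Finset.sum_congr rfl fun α _ => ?_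
    rw [integral_finset_sum Finset.univ fun β _ => (hintMono _).const_mul _]
    exact Finset.sum_congr rfl fun β _ => integral_const_mul _ _
  -- expansion of obj
  have hobj_formula : ∀ c : ↥(multiIdx n d) → ℝ,
      obj c = A - 2 * ∑ α : ↥(multiIdx n d), c α * bI α + q c := by
    intro c
    have heq : (fun x => (u x - poly d c x) ^ 2)
        = fun x => ((u x) ^ 2 - 2 * (u x * poly d c x)) + (poly d c x) ^ 2 := by
      funext x; ring
    have i2 : Integrable (fun x => 2 * (u x * poly d c x)) ν := (hintUPoly c).const_mul 2
    have i1 : Integrable (fun x => (u x) ^ 2 - 2 * (u x * poly d c x)) ν := hintU2.sub i2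
    show (∫ x, (u x - poly d c x) ^ 2 ∂ν) = _
    rw [heq, integral_add i1 (hintPolySq c), integral_sub hintU2 i2, integral_const_mul,
      hUP c]
  -- matrix entries expansion
  have hM_eq : ∀ (c : ↥(multiIdx n d) → ℝ) (α β : ↥(multiIdx n d)),
      locMat d Ω μ (poly d c) α β
        = ∑ γ : ↥(multiIdx n d), c γ * II (↑γ + (↑α + ↑β)) := by
    intro c α β
    have h1 : locMat d Ω μ (poly d c) α β = ∫ x, poly d c x * mono (↑α + ↑β) x ∂ν := rfl
    rw [h1]
    have heq : (fun x => poly d c x * mono (↑α + ↑β) x)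
        = fun x => ∑ γ : ↥(multiIdx n d), c γ * mono (↑γ + (↑α + ↑β)) x := by
      funext x
      rw [poly, Finset.sum_mul]
      refine Finset.sum_congr rfl fun γ _ => ?_
      rw [← hmono_mul γ.1 (α.1 + β.1) x]
      ring
    rw [heq, integral_finset_sum Finset.univ fun γ _ => ((hintMono _).const_mul _)]
    exact Finset.sum_congr rfl fun γ _ => integral_const_mul _ _
  -- hermitian always
  have hherm : ∀ c : ↥(multiIdx n d) → ℝ, (locMat d Ω μ (poly d c)).IsHermitian := by
    intro c
    show (locMat d Ω μ (poly d c))ᴴ = locMat d Ω μ (poly d c)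
    ext α β
    show star (locMat d Ω μ (poly d c) β α) = locMat d Ω μ (poly d c) α β
    rw [star_trivial]
    show (∫ x in Ω, poly d c x * mono (↑β + ↑α) x ∂μ)
      = ∫ x in Ω, poly d c x * mono (↑α + ↑β) x ∂μ
    rw [add_comm (β : Fin n → ℕ) (α : Fin n → ℕ)]
  -- invariance under a.e.-zero perturbation
  have hM_congr : ∀ c c' : ↥(multiIdx n d) → ℝ, poly d c =ᵐ[ν] poly d c' →
      locMat d Ω μ (poly d c) = locMat d Ω μ (poly d c') := by
    intro c c' hcc
    ext α β
    show (∫ x in Ω, poly d c x * mono (↑α + ↑β) x ∂μ)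
      = ∫ x in Ω, poly d c' x * mono (↑α + ↑β) x ∂μ
    refine integral_congr_ae ?_
    filter_upwards [hcc] with x hx
    rw [hx]
  have hobj_congr : ∀ c c' : ↥(multiIdx n d) → ℝ, poly d c =ᵐ[ν] poly d c' →
      obj c = obj c' := by
    intro c c' hcc
    refine integral_congr_ae ?_
    filter_upwards [hcc] with x hx
    rw [hx]
  -- the kernel subspace K
  set K : Submodule ℝ (↥(multiIdx n d) → ℝ) :=
    { carrier := {c | poly d c =ᵐ[ν] 0}
      add_mem' := by
        intro a b ha hb
        show poly d (a + b) =ᵐ[ν] 0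
        filter_upwards [ha, hb] with x hx1 hx2
        simp only [Pi.zero_apply] at hx1 hx2 ⊢
        rw [hpoly_add, hx1, hx2, add_zero]
      zero_mem' := by
        show poly d (0 : ↥(multiIdx n d) → ℝ) =ᵐ[ν] 0
        refine Filter.Eventually.of_forall fun x => ?_
        simp only [Pi.zero_apply]
        exact hpoly_zero x
      smul_mem' := by
        intro t a ha
        show poly d (t • a) =ᵐ[ν] 0
        filter_upwards [ha] with x hx
        simp only [Pi.zero_apply] at hx ⊢
        rw [hpoly_smul, hx, mul_zero] } with hKdef
  obtain ⟨K', hKK'⟩ := K.exists_isCompl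
  have hdecomp : ∀ c : ↥(multiIdx n d) → ℝ, ∃ k ∈ K, ∃ c' ∈ K', c = k + c' := by
    intro c
    have hc : c ∈ K ⊔ K' := by rw [hKK'.sup_eq_top]; trivial
    obtain ⟨y, hy, z, hz, hyz⟩ := Submodule.mem_sup.mp hc
    exact ⟨y, hy, z, hz, hyz.symm⟩
  -- q is nonnegative, and vanishes only on K
  have hq_nonneg : ∀ c : ↥(multiIdx n d) → ℝ, 0 ≤ q c :=
    fun c => integral_nonneg fun x => sq_nonneg _
  have hq_zero : ∀ c : ↥(multiIdx n d) → ℝ, q c = 0 → c ∈ K := by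
    intro c hc
    have h0 : (fun x => (poly d c x) ^ 2) =ᵐ[ν] 0 :=
      (integral_eq_zero_iff_of_nonneg (fun x => sq_nonneg _) (hintPolySq c)).mp hc
    show poly d c =ᵐ[ν] 0
    filter_upwards [h0] with x hx
    simp only [Pi.zero_apply] at hx ⊢
    exact pow_eq_zero_iff two_ne_zero |>.mp hx
  -- homogeneity of q
  have hq_smul : ∀ (t : ℝ) (c : ↥(multiIdx n d) → ℝ), q (t • c) = t ^ 2 * q c := by
    intro t c
    have heq : (fun x => (poly d (t • c) x) ^ 2) = fun x => t ^ 2 * (poly d c x) ^ 2 := by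
      funext x
      rw [hpoly_smul]
      ring
    show (∫ x, (poly d (t • c) x) ^ 2 ∂ν) = t ^ 2 * ∫ x, (poly d c x) ^ 2 ∂ν
    rw [heq, integral_const_mul]
  -- continuity of q and obj
  have hq_cont : Continuous q := by
    have h : q = fun c : ↥(multiIdx n d) → ℝ =>
        ∑ α : ↥(multiIdx n d), ∑ β : ↥(multiIdx n d), c α * c β * II (↑α + ↑β) :=
      funext hq_formula
    rw [h]
    exact continuous_finset_sum _ fun α _ => continuous_finset_sum _ fun β _ =>
      ((continuous_apply α).mul (continuous_apply β)).mul continuous_const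
  have hobj_cont : Continuous obj := by
    have h : obj = fun c : ↥(multiIdx n d) → ℝ =>
        A - 2 * ∑ α : ↥(multiIdx n d), c α * bI α + q c :=
      funext hobj_formula
    rw [h]
    exact (continuous_const.sub (continuous_const.mul
      (continuous_finset_sum _ fun α _ => (continuous_apply α).mul continuous_const))).add
      hq_cont
  -- coercivity constant on K'
  have hcoer : ∃ ε > (0 : ℝ), ∀ c ∈ K', ε * ‖c‖ ^ 2 ≤ q c := by
    by_cases hbot : K' = ⊥
    · refine ⟨1, one_pos, fun c hc => ?_⟩
      rw [hbot, Submodule.mem_bot] at hc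
      subst hc
      simp only [norm_zero]
      simpa using hq_nonneg 0
    · obtain ⟨v₀, hv₀K, hv₀ne⟩ := Submodule.exists_mem_ne_zero_of_ne_bot hbot
      have hsphere : IsCompact (Metric.sphere (0 : K') 1) := isCompact_sphere _ _
      have hne : (Metric.sphere (0 : K') 1).Nonempty := by
        refine ⟨⟨‖v₀‖⁻¹ • v₀, K'.smul_mem _ hv₀K⟩, ?_⟩
        rw [mem_sphere_zero_iff_norm]
        show ‖‖v₀‖⁻¹ • v₀‖ = 1
        rw [norm_smul, norm_inv, norm_norm]
        exact inv_mul_cancel₀ (norm_ne_zero_iff.mpr hv₀ne)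
      have hcont : ContinuousOn (fun v : K' => q ↑v) (Metric.sphere (0 : K') 1) :=
        (hq_cont.comp continuous_subtype_val).continuousOn
      obtain ⟨v₁, hv₁mem, hv₁min⟩ := hsphere.exists_isMinOn hne hcont
      have hv₁norm : ‖(v₁ : ↥(multiIdx n d) → ℝ)‖ = 1 := by
        have := mem_sphere_zero_iff_norm.mp hv₁mem
        simpa using this
      have hv₁ne : (v₁ : ↥(multiIdx n d) → ℝ) ≠ 0 := by
        intro h
        rw [h, norm_zero] at hv₁norm
        norm_num at hv₁norm
      have hεpos : 0 < q ↑v₁ := by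
        rcases lt_or_eq_of_le (hq_nonneg ↑v₁) with h | h
        · exact h
        · exfalso
          have hK : (v₁ : ↥(multiIdx n d) → ℝ) ∈ K := hq_zero _ h.symm
          exact hv₁ne (Submodule.disjoint_def.mp hKK'.1 _ hK v₁.2)
      refine ⟨q ↑v₁, hεpos, fun c hc => ?_⟩
      by_cases hczero : c = 0
      · subst hczero
        simp only [norm_zero]
        simpa using hq_nonneg 0
      · have htpos : 0 < ‖c‖ := norm_pos_iff.mpr hczero
        have hvK : ‖c‖⁻¹ • c ∈ K' := K'.smul_mem _ hc
        have hvnorm : ‖(⟨‖c‖⁻¹ • c, hvK⟩ : K')‖ = 1 := by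
          show ‖‖c‖⁻¹ • c‖ = 1
          rw [norm_smul, norm_inv, norm_norm]
          exact inv_mul_cancel₀ htpos.ne'
        have hqv : q ↑v₁ ≤ q (‖c‖⁻¹ • c) := hv₁min (mem_sphere_zero_iff_norm.mpr hvnorm)
        have hkey : q c = ‖c‖ ^ 2 * q (‖c‖⁻¹ • c) := by
          have h1 := hq_smul ‖c‖ (‖c‖⁻¹ • c)
          rw [smul_smul, mul_inv_cancel₀ htpos.ne', one_smul] at h1
          exact h1
        calc q ↑v₁ * ‖c‖ ^ 2 = ‖c‖ ^ 2 * q ↑v₁ := by ring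
          _ ≤ ‖c‖ ^ 2 * q (‖c‖⁻¹ • c) := mul_le_mul_of_nonneg_left hqv (sq_nonneg _)
          _ = q c := hkey.symm
  obtain ⟨ε, hεpos, hεle⟩ := hcoer
  -- lower bound for obj in terms of q
  have hlow : ∀ c : ↥(multiIdx n d) → ℝ, q c ≤ 2 * (obj c + A) := by
    intro c
    have hpt : ∀ x, (poly d c x) ^ 2
        ≤ 2 * ((u x - poly d c x) ^ 2 + (u x) ^ 2) := by
      intro x
      nlinarith [sq_nonneg (2 * u x - poly d c x)]
    have h1 : q c ≤ ∫ x, 2 * ((u x - poly d c x) ^ 2 + (u x) ^ 2) ∂ν :=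
      integral_mono (hintPolySq c) (((hintSubSq c).add hintU2).const_mul 2) hpt
    have h2 : (∫ x, 2 * ((u x - poly d c x) ^ 2 + (u x) ^ 2) ∂ν) = 2 * (obj c + A) := by
      rw [integral_const_mul, integral_add (hintSubSq c) hintU2]
    linarith
  -- PSD of the zero polynomial
  have hM0 : locMat d Ω μ (poly d (0 : ↥(multiIdx n d) → ℝ)) = 0 := by
    ext α β
    show (∫ x in Ω, poly d (0 : ↥(multiIdx n d) → ℝ) x * mono (↑α + ↑β) x ∂μ) = 0
    have h : (fun x => poly d (0 : ↥(multiIdx n d) → ℝ) x * mono (↑α + ↑β) x)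
        = fun _ => (0 : ℝ) := by
      funext x
      rw [hpoly_zero, zero_mul]
    rw [h]
    exact integral_zero _ _
  -- the constrained minimization set
  set S : Set (↥(multiIdx n d) → ℝ) := {c | c ∈ K' ∧ (locMat d Ω μ (poly d c)).PosSemidef
      ∧ obj c ≤ obj 0} with hSdef
  have h0S : (0 : ↥(multiIdx n d) → ℝ) ∈ S := by
    refine ⟨K'.zero_mem, ?_, le_refl _⟩
    rw [hM0]
    exact Matrix.PosSemidef.zero
  -- S is closed
  have hSclosed : IsClosed S := by
    have h1 : IsClosed (K' : Set (↥(multiIdx n d) → ℝ)) :=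
      Submodule.closed_of_finiteDimensional K'
    have h2 : IsClosed {c : ↥(multiIdx n d) → ℝ | (locMat d Ω μ (poly d c)).PosSemidef} := by
      have heq : {c : ↥(multiIdx n d) → ℝ | (locMat d Ω μ (poly d c)).PosSemidef}
          = ⋂ v : ↥(multiIdx n d) → ℝ,
            {c : ↥(multiIdx n d) → ℝ | 0 ≤ star v ⬝ᵥ (locMat d Ω μ (poly d c)).mulVec v} := by
        ext c
        simp only [Set.mem_setOf_eq, Set.mem_iInter]
        exact ⟨fun h v => h.dotProduct_mulVec_nonneg v, fun h => .of_dotProduct_mulVec_nonneg (hherm c) fun v => h v⟩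
      rw [heq]
      refine isClosed_iInter fun v => ?_
      have hcont : Continuous fun c : ↥(multiIdx n d) → ℝ =>
          star v ⬝ᵥ (locMat d Ω μ (poly d c)).mulVec v := by
        have heq2 : (fun c : ↥(multiIdx n d) → ℝ =>
              star v ⬝ᵥ (locMat d Ω μ (poly d c)).mulVec v)
            = fun c : ↥(multiIdx n d) → ℝ => ∑ α : ↥(multiIdx n d), (star v) α
                * ∑ β : ↥(multiIdx n d), locMat d Ω μ (poly d c) α β * v β := rfl
        rw [heq2]
        refine continuous_finset_sum _ fun α _ => continuous_const.mul ?_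
        refine continuous_finset_sum _ fun β _ => (Continuous.mul ?_ continuous_const)
        have heq3 : (fun c : ↥(multiIdx n d) → ℝ => locMat d Ω μ (poly d c) α β)
            = fun c : ↥(multiIdx n d) → ℝ =>
              ∑ γ : ↥(multiIdx n d), c γ * II (↑γ + (↑α + ↑β)) :=
          funext fun c => hM_eq c α β
        rw [heq3]
        exact continuous_finset_sum _ fun γ _ => (continuous_apply γ).mul continuous_const
      exact isClosed_le continuous_const hcont
    have h3 : IsClosed {c : ↥(multiIdx n d) → ℝ | obj c ≤ obj 0} :=
      isClosed_le hobj_cont continuous_const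
    have heqS : S = (K' : Set (↥(multiIdx n d) → ℝ))
        ∩ ({c : ↥(multiIdx n d) → ℝ | (locMat d Ω μ (poly d c)).PosSemidef}
          ∩ {c : ↥(multiIdx n d) → ℝ | obj c ≤ obj 0}) := by
      ext c
      constructor
      · rintro ⟨h1, h2, h3⟩
        exact ⟨h1, h2, h3⟩
      · rintro ⟨h1, h2, h3⟩
        exact ⟨h1, h2, h3⟩
    rw [heqS]
    exact h1.inter (h2.inter h3)
  -- S is bounded
  have hSbounded : Bornology.IsBounded S := by
    have hA_nonneg : (0 : ℝ) ≤ A := integral_nonneg fun x => sq_nonneg _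
    refine (Metric.isBounded_closedBall
      (x := (0 : ↥(multiIdx n d) → ℝ)) (r := Real.sqrt (2 * (obj 0 + A) / ε))).subset ?_
    intro c hc
    obtain ⟨hcK', hcPSD, hcobj⟩ := hc
    have h1 : ε * ‖c‖ ^ 2 ≤ 2 * (obj 0 + A) := by
      calc ε * ‖c‖ ^ 2 ≤ q c := hεle c hcK'
        _ ≤ 2 * (obj c + A) := hlow c
        _ ≤ 2 * (obj 0 + A) := by linarith
    have h2 : ‖c‖ ^ 2 ≤ 2 * (obj 0 + A) / ε := by
      rw [le_div_iff₀ hεpos]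
      linarith
    rw [Metric.mem_closedBall, dist_zero_right]
    exact (Real.le_sqrt (norm_nonneg c) ((sq_nonneg _).trans h2)).mpr h2
  have hScompact : IsCompact S := Metric.isCompact_of_isClosed_isBounded hSclosed hSbounded
  -- minimize
  obtain ⟨cstar, hcstarS, hmin⟩ :=
    hScompact.exists_isMinOn ⟨0, h0S⟩ hobj_cont.continuousOn
  refine ⟨cstar, hcstarS.2.1, ?_⟩
  intro p hp
  obtain ⟨k, hk, p', hp', hpsum⟩ := hdecomp p
  have hae : poly d p =ᵐ[ν] poly d p' := by
    have hk0 : poly d k =ᵐ[ν] 0 := hk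
    filter_upwards [hk0] with x hx
    rw [hpsum, hpoly_add]
    simp only [Pi.zero_apply] at hx
    rw [hx, zero_add]
  have hMp' : locMat d Ω μ (poly d p') = locMat d Ω μ (poly d p) :=
    (hM_congr p p' hae).symm
  have hobjp : obj p' = obj p := (hobj_congr p p' hae).symm
  show obj cstar ≤ obj p
  by_cases hle : obj p' ≤ obj 0
  · have hpS : p' ∈ S := ⟨hp', by rw [hMp']; exact hp, hle⟩
    calc obj cstar ≤ obj p' := hmin hpS
      _ = obj p := hobjp
  · have h1 : obj cstar ≤ obj 0 := hmin h0S
    push_neg at hle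
    linarith
end
end

section
/- Let n ∈ ℕ, let Ω ⊆ ℝⁿ be compact with nonempty interior, let λ be a finite Borel measure supported on Ω with λ(O) > 0 for some open set O ⊆ Ω, and let u ∈ L²(Ω,λ) with u ≥ 0 λ-almost everywhere. For each d ∈ ℕ let F_d be the set of polynomials p of degree at most d whose localizing matrix M_d(p z), with entries ∫_Ω p(x) x^{α+β} dλ(x) for |α|,|β| ≤ d, is positive semidefinite, and let u*_d ∈ F_d be a minimizer of ∫_Ω (u − p)² dλ over F_d. Then ‖u − u*_d‖_{L²(Ω,λ)} → 0 as d → ∞. -/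
open MeasureTheory Matrix Finset Filter
open scoped ENNReal NNReal

noncomputable section

lemma continuous_mono {n : ℕ} (α : Fin n → ℕ) : Continuous (mono α) :=
  continuous_finset_prod _ fun i _ => (continuous_apply i).pow _

lemma continuous_poly {n d : ℕ} (c : ↥(multiIdx n d) → ℝ) : Continuous (poly d c) :=
  continuous_finset_sum _ fun _ _ => continuous_const.mul (continuous_mono _)

lemma mono_add {n : ℕ} (α β : Fin n → ℕ) (x : Fin n → ℝ) :
    mono (α + β) x = mono α x * mono β x := by
  simp [mono, pow_add, Finset.prod_mul_distrib]

/-- Every `MvPolynomial` of total degree at most `d` is a `poly d c`. -/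
lemma exists_poly_eq {n : ℕ} (P : MvPolynomial (Fin n) ℝ) (d : ℕ)
    (hd : P.totalDegree ≤ d) :
    ∃ c : ↥(multiIdx n d) → ℝ, (fun x => MvPolynomial.eval x P) = poly d c := by
  classical
  set e := (Finsupp.equivFunOnFinite : ((Fin n) →₀ ℕ) ≃ (Fin n → ℕ))
  refine ⟨fun α => P.coeff (e.symm ↑α), ?_⟩
  funext x
  set emb : (Fin n → ℕ) ↪ ((Fin n) →₀ ℕ) := ⟨e.symm, e.symm.injective⟩ with hemb
  have hsub : P.support ⊆ (multiIdx n d).map emb := by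
    intro m hm
    simp only [Finset.mem_map]
    refine ⟨e m, ?_, e.symm_apply_apply m⟩
    have hsum : ∑ i, m i ≤ d := by
      have h1 : (m.sum fun _ k => k) ≤ P.totalDegree :=
        Finset.le_sup (f := fun m : (Fin n) →₀ ℕ => m.sum fun _ k => k) hm
      have h2 : (m.sum fun _ k => k) = ∑ i, m i := Finsupp.sum_fintype _ _ (fun _ => rfl)
      omega
    have hcoord : ∀ i, m i ≤ d := fun i =>
      le_trans (Finset.single_le_sum (f := fun i => m i) (fun _ _ => Nat.zero_le _)
        (Finset.mem_univ i)) hsum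
    simp only [multiIdx, Finset.mem_filter, Fintype.mem_piFinset, Finset.mem_range]
    exact ⟨fun i => Nat.lt_succ_of_le (hcoord i), hsum⟩
  have key : MvPolynomial.eval x P
      = ∑ m ∈ (multiIdx n d).map emb, P.coeff m * ∏ i, x i ^ m i := by
    rw [MvPolynomial.eval_eq']
    exact Finset.sum_subset (f := fun m => P.coeff m * ∏ i, x i ^ m i) hsub (fun m _ hm => by
      simp [MvPolynomial.notMem_support_iff.mp hm])
  rw [key, Finset.sum_map, poly, ← Finset.sum_attach (multiIdx n d)]
  refine Finset.sum_congr rfl fun α _ => ?_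
  simp [mono, hemb, e]

/-- Multivariate Stone–Weierstrass on a compact set. -/
lemma exists_mvpoly_near {n : ℕ} {Ω : Set (Fin n → ℝ)} (hΩ : IsCompact Ω)
    (f : (Fin n → ℝ) → ℝ) (hf : Continuous f) {ε : ℝ} (hε : 0 < ε) :
    ∃ P : MvPolynomial (Fin n) ℝ, ∀ x ∈ Ω, |MvPolynomial.eval x P - f x| < ε := by
  haveI : CompactSpace ↥Ω := isCompact_iff_compactSpace.mp hΩ
  set coord : Fin n → C(↥Ω, ℝ) :=
    fun i => ⟨fun x => (x : Fin n → ℝ) i, (continuous_apply i).comp continuous_subtype_val⟩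
    with hcoord
  set A : Subalgebra ℝ C(↥Ω, ℝ) := Algebra.adjoin ℝ (Set.range coord) with hA
  have w : A.SeparatesPoints := by
    intro x y hxy
    have hne : (x : Fin n → ℝ) ≠ (y : Fin n → ℝ) := fun h => hxy (Subtype.ext h)
    obtain ⟨i, hi⟩ := Function.ne_iff.mp hne
    exact ⟨_, ⟨coord i, Algebra.subset_adjoin ⟨i, rfl⟩, rfl⟩, hi⟩
  obtain ⟨⟨g, hgA⟩, hg⟩ := ContinuousMap.exists_mem_subalgebra_near_continuous_of_separatesPoints
    A w (fun x : ↥Ω => f x) (hf.comp continuous_subtype_val) ε hε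
  rw [hA, Algebra.adjoin_range_eq_range_aeval] at hgA
  obtain ⟨P, hP⟩ := hgA
  refine ⟨P, fun x hx => ?_⟩
  have hP' : (MvPolynomial.aeval coord) P = g := hP
  have h1 : MvPolynomial.eval x P = g ⟨x, hx⟩ := by
    rw [← hP']
    have h2 := MvPolynomial.comp_aeval_apply (f := coord)
      (ContinuousMap.evalAlgHom ℝ ℝ (⟨x, hx⟩ : ↥Ω)) P
    simp only [ContinuousMap.evalAlgHom_apply] at h2
    have h3 : MvPolynomial.eval x P = MvPolynomial.aeval x P := by
      rw [← MvPolynomial.coe_aeval_eq_eval]; rfl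
    rw [h3, h2]
    rfl
  rw [h1]
  simpa [Real.norm_eq_abs] using hg ⟨x, hx⟩

lemma eLpNorm_two_eq {X : Type*} [MeasurableSpace X] (ν : Measure X) {f : X → ℝ}
    (hf : MemLp f 2 ν) :
    eLpNorm f 2 ν = ENNReal.ofReal (∫ x, f x ^ 2 ∂ν) ^ (1/2 : ℝ) := by
  rw [eLpNorm_eq_lintegral_rpow_enorm_toReal (p := 2) two_ne_zero ENNReal.ofNat_ne_top]
  have h2 : (2 : ℝ≥0∞).toReal = (2 : ℝ) := by simp
  rw [h2]
  congr 1
  rw [ofReal_integral_eq_lintegral_ofReal hf.integrable_sq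
    (Filter.Eventually.of_forall fun x => sq_nonneg _)]
  refine lintegral_congr fun x => ?_
  have h3 : f x ^ 2 = ‖f x‖ ^ 2 := by rw [Real.norm_eq_abs, sq_abs]
  rw [h3, ENNReal.ofReal_pow (norm_nonneg _), ofReal_norm,
    ← ENNReal.rpow_natCast]
  norm_num

lemma eLpNorm_le_of_integral_sq_le {X : Type*} [MeasurableSpace X] (ν : Measure X)
    {f g : X → ℝ} (hf : MemLp f 2 ν) (hg : MemLp g 2 ν)
    (h : ∫ x, f x ^ 2 ∂ν ≤ ∫ x, g x ^ 2 ∂ν) :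
    eLpNorm f 2 ν ≤ eLpNorm g 2 ν := by
  rw [eLpNorm_two_eq ν hf, eLpNorm_two_eq ν hg]
  exact ENNReal.rpow_le_rpow (ENNReal.ofReal_le_ofReal h) (by norm_num)

lemma memLp_of_continuous {n : ℕ} {Ω : Set (Fin n → ℝ)} (hΩ : IsCompact Ω)
    (μ : Measure (Fin n → ℝ)) [IsFiniteMeasure μ] {f : (Fin n → ℝ) → ℝ}
    (hf : Continuous f) : MemLp f 2 (μ.restrict Ω) := by
  rcases Ω.eq_empty_or_nonempty with rfl | hne
  · simp [MemLp, hf.aestronglyMeasurable]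
  obtain ⟨C, hC⟩ := hΩ.exists_bound_of_continuousOn hf.continuousOn
  exact MemLp.of_bound hf.aestronglyMeasurable C
    ((ae_restrict_iff' hΩ.isClosed.measurableSet).2
      (Filter.Eventually.of_forall fun x hx => hC x hx))

lemma locMat_posSemidef {n : ℕ} (d : ℕ) {Ω : Set (Fin n → ℝ)} (hΩ : IsCompact Ω)
    (μ : Measure (Fin n → ℝ)) [IsFiniteMeasure μ] {p : (Fin n → ℝ) → ℝ}
    (hp : Continuous p) (hpos : ∀ x ∈ Ω, 0 ≤ p x) :
    (locMat d Ω μ p).PosSemidef := by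
  have hmeas : MeasurableSet Ω := hΩ.isClosed.measurableSet
  have hint : ∀ q : (Fin n → ℝ) → ℝ, Continuous q → IntegrableOn q Ω μ := fun q hq =>
    hq.continuousOn.integrableOn_compact hΩ
  rw [Matrix.posSemidef_iff_dotProduct_mulVec]
  constructor
  · refine Matrix.IsHermitian.ext fun α β => ?_
    simp only [locMat, Matrix.of_apply, RCLike.star_def, starRingEnd_apply, star_trivial]
    congr 1
    ext x
    rw [add_comm (α : Fin n → ℕ) (β : Fin n → ℕ)]
  · intro v
    have step1 : ∀ α : ↥(multiIdx n d), (locMat d Ω μ p).mulVec v α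
        = ∫ x in Ω, p x * mono (↑α) x * poly d v x ∂μ := by
      intro α
      rw [Matrix.mulVec]
      show ∑ β, locMat d Ω μ p α β * v β = _
      have h1 : ∀ β : ↥(multiIdx n d), locMat d Ω μ p α β * v β
          = ∫ x in Ω, p x * mono (↑α) x * (v β * mono (↑β) x) ∂μ := by
        intro β
        rw [locMat, Matrix.of_apply, ← integral_mul_const]
        refine integral_congr_ae (Filter.Eventually.of_forall fun x => ?_)
        simp only [mono_add]; ring
      rw [Finset.sum_congr rfl fun β _ => h1 β, ← integral_finset_sum]
      · refine integral_congr_ae (Filter.Eventually.of_forall fun x => ?_)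
        simp only [poly, Finset.mul_sum]
      · intro β _
        exact hint _ (((hp.mul (continuous_mono _)).mul
          (continuous_const.mul (continuous_mono _))))
    have step2 : star v ⬝ᵥ (locMat d Ω μ p).mulVec v
        = ∫ x in Ω, p x * (poly d v x) ^ 2 ∂μ := by
      rw [dotProduct]
      have h1 : ∀ α : ↥(multiIdx n d), star v α * (locMat d Ω μ p).mulVec v α
          = ∫ x in Ω, v α * (p x * mono (↑α) x * poly d v x) ∂μ := by
        intro α
        rw [step1, ← integral_const_mul]
        rfl
      rw [Finset.sum_congr rfl fun α _ => h1 α, ← integral_finset_sum]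
      · refine integral_congr_ae (Filter.Eventually.of_forall fun x => ?_)
        calc ∑ α : ↥(multiIdx n d), v α * (p x * mono (↑α) x * poly d v x)
            = (∑ α : ↥(multiIdx n d), v α * mono (↑α) x) * (p x * poly d v x) := by
              rw [Finset.sum_mul]
              exact Finset.sum_congr rfl fun α _ => by ring
          _ = p x * poly d v x ^ 2 := by rw [← poly]; ring
      · intro α _
        exact (hint _ ((hp.mul (continuous_mono _)).mul (continuous_poly v))).const_mul _
    rw [step2]
    exact setIntegral_nonneg hmeas fun x hx => mul_nonneg (hpos x hx) (sq_nonneg _)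

lemma ennreal_aux {M : ℝ≥0∞} (hM : M ≠ ⊤) {r : ℝ} (hr : 0 < r) :
    M * ENNReal.ofReal (2 * (r / (8 * (M.toReal + 1)))) ≤ ENNReal.ofReal (r / 4) := by
  have hMt : 0 ≤ M.toReal := ENNReal.toReal_nonneg
  have hδ : 0 ≤ 2 * (r / (8 * (M.toReal + 1))) := by positivity
  have h1 : M ≤ ENNReal.ofReal (M.toReal + 1) :=
    le_trans (le_of_eq (ENNReal.ofReal_toReal hM).symm)
      (ENNReal.ofReal_le_ofReal (by linarith))
  calc M * ENNReal.ofReal (2 * (r / (8 * (M.toReal + 1))))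
      ≤ ENNReal.ofReal (M.toReal + 1) * ENNReal.ofReal (2 * (r / (8 * (M.toReal + 1)))) :=
        mul_le_mul_left h1 _
    _ = ENNReal.ofReal ((M.toReal + 1) * (2 * (r / (8 * (M.toReal + 1))))) :=
        (ENNReal.ofReal_mul (by linarith)).symm
    _ ≤ ENNReal.ofReal (r / 4) := by
        refine ENNReal.ofReal_le_ofReal (le_of_eq ?_)
        have hne : M.toReal + 1 ≠ 0 := by linarith
        field_simp
        ring

/-- if for each `d` the polynomial `U d` of degree at most `d` minimizes
`∫_Ω (u - p)² dλ` over the set `F_d` of polynomials `p` of degree at most `d` whose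
localizing matrix `M_d(p z)` is positive semidefinite, then
`‖u - U d‖_{L²(Ω,λ)} → 0` as `d → ∞`. -/
theorem stmt9 (n : ℕ) (Ω : Set (Fin n → ℝ)) (hΩ : IsCompact Ω)
    (hΩint : (interior Ω).Nonempty)
    (μ : Measure (Fin n → ℝ)) [IsFiniteMeasure μ] (hsupp : μ Ωᶜ = 0)
    (O : Set (Fin n → ℝ)) (hO : IsOpen O) (hOΩ : O ⊆ Ω) (hOpos : 0 < μ O)
    (u : (Fin n → ℝ) → ℝ) (hu : MemLp u 2 (μ.restrict Ω))
    (hupos : ∀ᵐ x ∂(μ.restrict Ω), 0 ≤ u x)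
    (U : ℕ → (Fin n → ℝ) → ℝ)
    (hUfeas : ∀ d, ∃ c : ↥(multiIdx n d) → ℝ,
      U d = poly d c ∧ (locMat d Ω μ (U d)).PosSemidef)
    (hUmin : ∀ d, ∀ p : ↥(multiIdx n d) → ℝ, (locMat d Ω μ (poly d p)).PosSemidef →
      ∫ x in Ω, (u x - U d x) ^ 2 ∂μ ≤ ∫ x in Ω, (u x - poly d p x) ^ 2 ∂μ) :
    Tendsto (fun d => eLpNorm (fun x => u x - U d x) 2 (μ.restrict Ω)) atTop (nhds 0) := by
  have hmeas : MeasurableSet Ω := hΩ.isClosed.measurableSet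
  have hUmem : ∀ d, MemLp (fun x => u x - U d x) 2 (μ.restrict Ω) := by
    intro d
    obtain ⟨c, hc, -⟩ := hUfeas d
    exact hu.sub (by rw [hc]; exact memLp_of_continuous hΩ μ (continuous_poly c))
  rw [ENNReal.tendsto_atTop_zero]
  intro ε hε
  obtain ⟨r, hr, hrε⟩ : ∃ r : ℝ, 0 < r ∧ ENNReal.ofReal r ≤ ε := by
    rcases eq_or_ne ε ⊤ with rfl | hεt
    · exact ⟨1, one_pos, le_top⟩
    · exact ⟨ε.toReal, ENNReal.toReal_pos hε.ne' hεt,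
        le_of_eq (ENNReal.ofReal_toReal hεt)⟩
  haveI hregμ : μ.Regular := by infer_instance
  haveI hreg : (μ.restrict Ω).Regular :=
    MeasureTheory.Measure.Regular.restrict_of_measure_ne_top (measure_ne_top μ Ω)
  have hr4 : (0:ℝ) < r / 4 := by linarith
  obtain ⟨g, -, hgu, hgc, -⟩ := hu.exists_hasCompactSupport_eLpNorm_sub_le
    ENNReal.ofNat_ne_top (ε := ENNReal.ofReal (r / 4)) (ENNReal.ofReal_pos.mpr hr4).ne'
  set gp : (Fin n → ℝ) → ℝ := fun x => max (g x) 0 with hgp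
  have hgpc : Continuous gp := hgc.max continuous_const
  have hgpmem : MemLp gp 2 (μ.restrict Ω) := memLp_of_continuous hΩ μ hgpc
  have hugp : eLpNorm (fun x => u x - gp x) 2 (μ.restrict Ω) ≤ ENNReal.ofReal (r / 4) := by
    refine le_trans (eLpNorm_mono_ae ?_) hgu
    filter_upwards [hupos] with x hx
    simp only [Pi.sub_apply, Real.norm_eq_abs, hgp]
    rcases le_total 0 (g x) with h | h
    · rw [max_eq_left h]
    · rw [max_eq_right h, sub_zero, abs_of_nonneg hx]
      calc u x ≤ u x - g x := by linarith
        _ ≤ |u x - g x| := le_abs_self _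
  set M : ℝ≥0∞ := (μ.restrict Ω) Set.univ ^ (2 : ℝ≥0∞).toReal⁻¹ with hM_def
  have hMne : M ≠ ⊤ := by
    rw [hM_def]
    exact (ENNReal.rpow_lt_top_of_nonneg (inv_nonneg.mpr ENNReal.toReal_nonneg)
      (measure_ne_top _ _)).ne
  set δ : ℝ := r / (8 * (M.toReal + 1)) with hδ
  have hMt : 0 ≤ M.toReal := ENNReal.toReal_nonneg
  have hδpos : 0 < δ := by rw [hδ]; positivity
  obtain ⟨P₀, hP₀⟩ := exists_mvpoly_near hΩ gp hgpc hδpos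
  set P : MvPolynomial (Fin n) ℝ := P₀ + MvPolynomial.C δ with hP
  have hPg : ∀ x ∈ Ω, |MvPolynomial.eval x P - gp x| ≤ 2 * δ := by
    intro x hx
    have h := abs_lt.mp (hP₀ x hx)
    simp only [hP, map_add, MvPolynomial.eval_C]
    rw [abs_le]
    constructor <;> linarith [h.1, h.2]
  have hPpos : ∀ x ∈ Ω, 0 ≤ MvPolynomial.eval x P := by
    intro x hx
    have h := abs_lt.mp (hP₀ x hx)
    have h0 : 0 ≤ gp x := le_max_right _ _
    simp only [hP, map_add, MvPolynomial.eval_C]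
    linarith [h.1]
  have hPcont : Continuous fun x => MvPolynomial.eval x P := MvPolynomial.continuous_eval P
  have hPmem : MemLp (fun x => MvPolynomial.eval x P) 2 (μ.restrict Ω) :=
    memLp_of_continuous hΩ μ hPcont
  have hgP : eLpNorm (fun x => gp x - MvPolynomial.eval x P) 2 (μ.restrict Ω)
      ≤ ENNReal.ofReal (r / 4) := by
    have hb : ∀ᵐ x ∂(μ.restrict Ω), ‖gp x - MvPolynomial.eval x P‖ ≤ 2 * δ :=
      (ae_restrict_iff' hmeas).2 (Filter.Eventually.of_forall fun x hx => by
        rw [Real.norm_eq_abs, abs_sub_comm]; exact hPg x hx)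
    refine le_trans (eLpNorm_le_of_ae_bound hb) ?_
    rw [← hM_def, hδ]
    exact ennreal_aux hMne hr
  have huP : eLpNorm (fun x => u x - MvPolynomial.eval x P) 2 (μ.restrict Ω)
      ≤ ENNReal.ofReal (r / 4) + ENNReal.ofReal (r / 4) := by
    have hsplit : (fun x => u x - MvPolynomial.eval x P)
        = (fun x => u x - gp x) + fun x => gp x - MvPolynomial.eval x P := by
      funext x; simp only [Pi.add_apply]; ring
    rw [hsplit]
    refine le_trans (eLpNorm_add_le ?_ ?_ one_le_two) (add_le_add hugp hgP)
    · exact (hu.sub hgpmem).aestronglyMeasurable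
    · exact (hgpmem.sub hPmem).aestronglyMeasurable
  refine ⟨P.totalDegree, fun d hd => ?_⟩
  obtain ⟨c, hc⟩ := exists_poly_eq P d hd
  have hfeas : (locMat d Ω μ (poly d c)).PosSemidef := by
    rw [← hc]; exact locMat_posSemidef d hΩ μ hPcont hPpos
  have hmin := hUmin d c hfeas
  rw [← hc] at hmin
  have hcomp : eLpNorm (fun x => u x - U d x) 2 (μ.restrict Ω)
      ≤ eLpNorm (fun x => u x - MvPolynomial.eval x P) 2 (μ.restrict Ω) :=
    eLpNorm_le_of_integral_sq_le _ (hUmem d) (hu.sub hPmem) hmin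
  refine le_trans hcomp (le_trans huP ?_)
  rw [← ENNReal.ofReal_add (by linarith) (by linarith)]
  exact le_trans (ENNReal.ofReal_le_ofReal (by linarith)) hrε
end
end
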